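/- The equation (a+b)* · b · (a+b)* = (a* · b · a*)⁺ is valid in all algebras of binary relations: for every set S and all binary relations A, B on S, (A∪B)* ∘ B ∘ (A∪B)* equals the transitive closure of A* ∘ B ∘ A*, where ∘ is relation composition and * is reflexive-transitive closure. -/

import Mathlib

section Aux

variable {S : Type} (A B : S → S → Prop)

/-- Abbreviation for `A* ∘ B ∘ A*`. -/
private def CC : S → S → Prop :=
  Relation.Comp (Relation.Comp (Relation.ReflTransGen A) B) (Relation.ReflTransGen A)

private lemma cc_of_b {u v : S} (h : B u v) : CC A B u v :=
  ⟨v, ⟨u, Relation.ReflTransGen.refl, h⟩, Relation.ReflTransGen.refl⟩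

private lemma cc_append {x y z : S} (h : CC A B x y) (h' : Relation.ReflTransGen A y z) :
    CC A B x z := by
  obtain ⟨w, hw, hwy⟩ := h
  exact ⟨w, hw, hwy.trans h'⟩

private lemma cc_prepend {x y z : S} (h : Relation.ReflTransGen A x y) (h' : CC A B y z) :
    CC A B x z := by
  obtain ⟨w, ⟨a, hya, hB⟩, hwz⟩ := h'
  exact ⟨w, ⟨a, h.trans hya, hB⟩, hwz⟩

private lemma tc_append {x y z : S} (h : Relation.TransGen (CC A B) x y)
    (h' : Relation.ReflTransGen A y z) : Relation.TransGen (CC A B) x z := by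
  cases h with
  | single hc => exact Relation.TransGen.single (cc_append A B hc h')
  | tail ht hc => exact ht.tail (cc_append A B hc h')

private lemma tc_prepend {x y z : S} (h : Relation.ReflTransGen A x y)
    (h' : Relation.TransGen (CC A B) y z) : Relation.TransGen (CC A B) x z := by
  cases (Relation.TransGen.head'_iff.mp h') with
  | intro b hb =>
    exact Relation.TransGen.head' (cc_prepend A B h hb.1) hb.2

private lemma split_lemma {x y : S}
    (h : Relation.ReflTransGen (fun x y => A x y ∨ B x y) x y) :
    Relation.ReflTransGen A x y ∨ Relation.TransGen (CC A B) x y := by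
  induction h with
  | refl => exact Or.inl Relation.ReflTransGen.refl
  | tail hxb step ih =>
    rename_i b c
    cases ih with
    | inl hA =>
      cases step with
      | inl hs => exact Or.inl (hA.tail hs)
      | inr hs => exact Or.inr (Relation.TransGen.single ⟨c, ⟨b, hA, hs⟩, .refl⟩)
    | inr hT =>
      cases step with
      | inl hs => exact Or.inr (tc_append A B hT (Relation.ReflTransGen.single hs))
      | inr hs => exact Or.inr (hT.tail (cc_of_b A B hs))

end Aux

/-- `(a+b)* · b · (a+b)* = (a* · b · a*)⁺` is valid in all algebras of
binary relations. -/
theorem stmt7 {S : Type} (A B : S → S → Prop) :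
    Relation.Comp
        (Relation.Comp (Relation.ReflTransGen fun x y => A x y ∨ B x y) B)
        (Relation.ReflTransGen fun x y => A x y ∨ B x y)
      =
    Relation.TransGen
      (Relation.Comp (Relation.Comp (Relation.ReflTransGen A) B)
        (Relation.ReflTransGen A)) := by
  have hmono : ∀ {x y : S}, Relation.ReflTransGen A x y →
      Relation.ReflTransGen (fun x y => A x y ∨ B x y) x y :=
    fun h => Relation.ReflTransGen.mono (fun _ _ ha => Or.inl ha) _ _ h
  funext x y
  apply propext
  constructor
  · rintro ⟨w, ⟨a, hxa, hB⟩, hwy⟩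
    have hC0 : CC A B a w := cc_of_b A B hB
    rcases split_lemma A B hxa with h1 | h1 <;> rcases split_lemma A B hwy with h2 | h2
    · exact Relation.TransGen.single (cc_prepend A B h1 (cc_append A B hC0 h2))
    · exact (Relation.TransGen.single (cc_prepend A B h1 hC0)).trans h2
    · exact tc_append A B (h1.tail hC0) h2
    · exact ((h1.tail hC0)).trans h2
  · intro h
    induction h with
    | single hc =>
      obtain ⟨w, ⟨a, hxa, hB⟩, hwy⟩ := hc
      exact ⟨w, ⟨a, hmono hxa, hB⟩, hmono hwy⟩
    | tail _ hc ih =>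
      obtain ⟨w, ⟨a, hba, hB⟩, hwy⟩ := hc
      obtain ⟨w', ⟨a', hxa', hB'⟩, hw'b⟩ := ih
      exact ⟨w, ⟨a, (hxa'.tail (Or.inr hB')).trans (hw'b.trans (hmono hba)), hB⟩, hmono hwy⟩
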